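/- The subalgebra of polynomials in ℝ[p,q] (polynomials in two variables over ℝ) that are invariant under the algebra automorphism determined by p ↦ −p, q ↦ −q is exactly the ℝ-subalgebra generated by the three polynomials p² + q², p² − q², and 2pq; that is, a polynomial f satisfies f(−p,−q) = f(p,q) if and only if f lies in the subalgebra generated by {p² + q², p² − q², 2pq}. -/

import Mathlib

open MvPolynomial

private noncomputable def sig : MvPolynomial (Fin 2) ℝ →ₐ[ℝ] MvPolynomial (Fin 2) ℝ :=
  MvPolynomial.aeval (fun i => -(MvPolynomial.X i : MvPolynomial (Fin 2) ℝ))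

private lemma monomial_eq2 (d : Fin 2 →₀ ℕ) (c : ℝ) :
    (monomial d c : MvPolynomial (Fin 2) ℝ) = C c * X 0 ^ d 0 * X 1 ^ d 1 := by
  rw [monomial_eq, Finsupp.prod_fintype _ _ (by simp), Fin.prod_univ_two, mul_assoc]

private lemma sig_monomial (d : Fin 2 →₀ ℕ) (c : ℝ) :
    sig (monomial d c) = (-1 : ℝ) ^ (d 0 + d 1) • monomial d c := by
  rw [monomial_eq2]
  simp only [sig, map_mul, map_pow, aeval_X, aeval_C, Algebra.smul_def, algebraMap_eq, map_pow,
    map_neg, map_one]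
  rw [neg_pow (X 0 : MvPolynomial (Fin 2) ℝ), neg_pow (X 1 : MvPolynomial (Fin 2) ℝ), pow_add]
  ring

private lemma coeff_sig (d : Fin 2 →₀ ℕ) (f : MvPolynomial (Fin 2) ℝ) :
    coeff d (sig f) = (-1 : ℝ) ^ (d 0 + d 1) * coeff d f := by
  induction f using MvPolynomial.induction_on' with
  | monomial d' c =>
    rcases eq_or_ne d' d with h | h
    · subst h; rw [sig_monomial]; simp [coeff_smul, coeff_monomial, smul_eq_mul]
    · rw [sig_monomial]; simp [coeff_smul, coeff_monomial, h]
  | add p q hp hq => simp only [map_add, coeff_add, hp, hq]; ring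

/-- A polynomial `f ∈ ℝ[p,q]` is invariant under the algebra automorphism determined by
`p ↦ -p`, `q ↦ -q` if and only if it lies in the ℝ-subalgebra generated by the three
polynomials `p² + q²`, `p² − q²` and `2pq`. -/
theorem even_polynomial_invariants (f : MvPolynomial (Fin 2) ℝ) :
    MvPolynomial.aeval (fun i => -(MvPolynomial.X i : MvPolynomial (Fin 2) ℝ)) f = f ↔
      f ∈ Algebra.adjoin ℝ
        ({(X 0 : MvPolynomial (Fin 2) ℝ) ^ 2 + X 1 ^ 2,
          (X 0 : MvPolynomial (Fin 2) ℝ) ^ 2 - X 1 ^ 2,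
          2 * ((X 0 : MvPolynomial (Fin 2) ℝ) * X 1)} : Set (MvPolynomial (Fin 2) ℝ)) := by
  set S : Set (MvPolynomial (Fin 2) ℝ) :=
    {(X 0 : MvPolynomial (Fin 2) ℝ) ^ 2 + X 1 ^ 2,
     (X 0 : MvPolynomial (Fin 2) ℝ) ^ 2 - X 1 ^ 2,
     2 * ((X 0 : MvPolynomial (Fin 2) ℝ) * X 1)} with hS
  set A := Algebra.adjoin ℝ S with hA
  have hg1 : (X 0 : MvPolynomial (Fin 2) ℝ) ^ 2 + X 1 ^ 2 ∈ A :=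
    Algebra.subset_adjoin (by simp [hS])
  have hg2 : (X 0 : MvPolynomial (Fin 2) ℝ) ^ 2 - X 1 ^ 2 ∈ A :=
    Algebra.subset_adjoin (by simp [hS])
  have hg3 : 2 * ((X 0 : MvPolynomial (Fin 2) ℝ) * X 1) ∈ A :=
    Algebra.subset_adjoin (by simp [hS])
  have hX0sq : (X 0 : MvPolynomial (Fin 2) ℝ) ^ 2 ∈ A := by
    have h2 : ((X 0 : MvPolynomial (Fin 2) ℝ) ^ 2 + X 1 ^ 2) + (X 0 ^ 2 - X 1 ^ 2)
        = (2 : ℝ) • (X 0 ^ 2 : MvPolynomial (Fin 2) ℝ) := by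
      rw [Algebra.smul_def, map_ofNat]; ring
    have e1 : (X 0 : MvPolynomial (Fin 2) ℝ) ^ 2
        = (1/2 : ℝ) • (((X 0 : MvPolynomial (Fin 2) ℝ) ^ 2 + X 1 ^ 2) + (X 0 ^ 2 - X 1 ^ 2)) := by
      rw [h2, smul_smul]; norm_num
    rw [e1]
    exact Subalgebra.smul_mem _ (Subalgebra.add_mem _ hg1 hg2) _
  have hX1sq : (X 1 : MvPolynomial (Fin 2) ℝ) ^ 2 ∈ A := by
    have h2 : ((X 0 : MvPolynomial (Fin 2) ℝ) ^ 2 + X 1 ^ 2) - (X 0 ^ 2 - X 1 ^ 2)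
        = (2 : ℝ) • (X 1 ^ 2 : MvPolynomial (Fin 2) ℝ) := by
      rw [Algebra.smul_def, map_ofNat]; ring
    have e1 : (X 1 : MvPolynomial (Fin 2) ℝ) ^ 2
        = (1/2 : ℝ) • (((X 0 : MvPolynomial (Fin 2) ℝ) ^ 2 + X 1 ^ 2) - (X 0 ^ 2 - X 1 ^ 2)) := by
      rw [h2, smul_smul]; norm_num
    rw [e1]
    exact Subalgebra.smul_mem _ (Subalgebra.sub_mem _ hg1 hg2) _
  have hX01 : (X 0 : MvPolynomial (Fin 2) ℝ) * X 1 ∈ A := by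
    have h2 : 2 * ((X 0 : MvPolynomial (Fin 2) ℝ) * X 1)
        = (2 : ℝ) • ((X 0 : MvPolynomial (Fin 2) ℝ) * X 1) := by
      rw [Algebra.smul_def, map_ofNat]
    have e1 : (X 0 : MvPolynomial (Fin 2) ℝ) * X 1
        = (1/2 : ℝ) • (2 * ((X 0 : MvPolynomial (Fin 2) ℝ) * X 1)) := by
      rw [h2, smul_smul]; norm_num
    rw [e1]
    exact Subalgebra.smul_mem _ hg3 _
  constructor
  · intro h
    have hcoeff : ∀ d ∈ f.support, Even (d 0 + d 1) := by
      intro d hd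
      by_contra hodd
      have hcd : coeff d f = (-1 : ℝ) ^ (d 0 + d 1) * coeff d f := by
        conv_lhs => rw [← h]
        exact coeff_sig d f
      rw [Odd.neg_one_pow (Nat.not_even_iff_odd.mp hodd), neg_one_mul] at hcd
      have : coeff d f = 0 := by linarith
      exact (mem_support_iff.mp hd) this
    rw [f.as_sum]
    refine Subalgebra.sum_mem _ (fun d hd => ?_)
    rw [monomial_eq2]
    have hC : (C (coeff d f) : MvPolynomial (Fin 2) ℝ) ∈ A := by
      rw [← algebraMap_eq]; exact Subalgebra.algebraMap_mem A _
    have hpow : (X 0 : MvPolynomial (Fin 2) ℝ) ^ d 0 * X 1 ^ d 1 ∈ A := by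
      rcases Nat.even_or_odd (d 0) with ⟨m, hm⟩ | ⟨m, hm⟩
      · obtain ⟨k, hk⟩ : Even (d 1) := (Nat.even_add.mp (hcoeff d hd)).mp ⟨m, hm⟩
        have : (X 0 : MvPolynomial (Fin 2) ℝ) ^ d 0 * X 1 ^ d 1
            = (X 0 ^ 2) ^ m * (X 1 ^ 2) ^ k := by
          rw [← pow_mul, ← pow_mul, hm, hk]; ring_nf
        rw [this]
        exact Subalgebra.mul_mem _ (Subalgebra.pow_mem _ hX0sq _) (Subalgebra.pow_mem _ hX1sq _)
      · obtain ⟨k, hk⟩ : Odd (d 1) := Nat.not_even_iff_odd.mp fun h1 =>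
          Nat.not_even_iff_odd.mpr ⟨m, hm⟩ ((Nat.even_add.mp (hcoeff d hd)).mpr h1)
        have : (X 0 : MvPolynomial (Fin 2) ℝ) ^ d 0 * X 1 ^ d 1
            = (X 0 * X 1) * ((X 0 ^ 2) ^ m * (X 1 ^ 2) ^ k) := by
          rw [← pow_mul, ← pow_mul, hm, hk]; ring
        rw [this]
        exact Subalgebra.mul_mem _ hX01
          (Subalgebra.mul_mem _ (Subalgebra.pow_mem _ hX0sq _) (Subalgebra.pow_mem _ hX1sq _))
    rw [mul_assoc]
    exact Subalgebra.mul_mem _ hC hpow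
  · intro hf
    induction hf using Algebra.adjoin_induction with
    | mem x hx =>
      rcases hx with h | h | h <;> subst h <;>
        simp only [map_add, map_sub, map_mul, map_pow, map_ofNat, aeval_X] <;> ring
    | algebraMap r => simp
    | add x y _ _ hx hy => rw [map_add, hx, hy]
    | mul x y _ _ hx hy => rw [map_mul, hx, hy]
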